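/- (Model 2b3c5a) Define vector fields on ℝ⁴ (coordinates (x,y,u,v)) by e₁ = ∂x + 2x∂u + 3u∂v, e₂ = ∂y, e₃ = x∂x + 2u∂u + 3v∂v, e₄ = x∂y, e₅ = y∂y, e₆ = u∂y, e₇ = v∂y, and let S = {(x, y, x², x³) : (x,y) ∈ ℝ²}. Then: (i) each of e₁,…,e₇ is tangent to S; (ii) at every point of S the first two components of e₁ and e₂ are (1,0) and (0,1), so S is affinely homogeneous; (iii) with bracket [X,Y](p) = (DY)(p)(X(p)) − (DX)(p)(Y(p)) one has [e₁,e₃] = e₁, [e₁,e₄] = e₂, [e₁,e₆] = 2·e₄, [e₁,e₇] = 3·e₆, [e₂,e₅] = e₂, [e₃,e₄] = e₄, [e₃,e₆] = 2·e₆, [e₃,e₇] = 3·e₇, [e₄,e₅] = e₄, [e₅,e₆] = −e₆, [e₅,e₇] = −e₇, and [e₁,e₂] = 0. -/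

import Mathlib

namespace Model2b3c5a

/-- Lie bracket of vector fields on `ℝ⁴`, `[X,Y](p) = DY(p)(X(p)) − DX(p)(Y(p))`. -/
noncomputable def lieBracket (X Y : (Fin 4 → ℝ) → Fin 4 → ℝ) :
    (Fin 4 → ℝ) → Fin 4 → ℝ :=
  fun p => fderiv ℝ Y p (X p) - fderiv ℝ X p (Y p)

/-- Tangency of a vector field `X` on `ℝ⁴ ∋ (x,y,u,v)` to the graph
`S = {(x, y, F(x,y), G(x,y))}`. -/
def TangentToGraph (F G : ℝ × ℝ → ℝ) (X : (Fin 4 → ℝ) → Fin 4 → ℝ) : Prop :=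
  ∀ p : ℝ × ℝ,
    X ![p.1, p.2, F p, G p] 2
        = fderiv ℝ F p (1, 0) * X ![p.1, p.2, F p, G p] 0
          + fderiv ℝ F p (0, 1) * X ![p.1, p.2, F p, G p] 1 ∧
    X ![p.1, p.2, F p, G p] 3
        = fderiv ℝ G p (1, 0) * X ![p.1, p.2, F p, G p] 0
          + fderiv ℝ G p (0, 1) * X ![p.1, p.2, F p, G p] 1

/-- `u = x²`. -/
noncomputable def F : ℝ × ℝ → ℝ := fun p => p.1 ^ 2
/-- `v = x³`. -/
noncomputable def G : ℝ × ℝ → ℝ := fun p => p.1 ^ 3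

/-- `e₁ = ∂x + 2x∂u + 3u∂v`. -/
noncomputable def e₁ : (Fin 4 → ℝ) → Fin 4 → ℝ := fun p => ![1, 0, 2 * p 0, 3 * p 2]
/-- `e₂ = ∂y`. -/
noncomputable def e₂ : (Fin 4 → ℝ) → Fin 4 → ℝ := fun _ => ![0, 1, 0, 0]
/-- `e₃ = x∂x + 2u∂u + 3v∂v`. -/
noncomputable def e₃ : (Fin 4 → ℝ) → Fin 4 → ℝ := fun p => ![p 0, 0, 2 * p 2, 3 * p 3]
/-- `e₄ = x∂y`. -/
noncomputable def e₄ : (Fin 4 → ℝ) → Fin 4 → ℝ := fun p => ![0, p 0, 0, 0]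
/-- `e₅ = y∂y`. -/
noncomputable def e₅ : (Fin 4 → ℝ) → Fin 4 → ℝ := fun p => ![0, p 1, 0, 0]
/-- `e₆ = u∂y`. -/
noncomputable def e₆ : (Fin 4 → ℝ) → Fin 4 → ℝ := fun p => ![0, p 2, 0, 0]
/-- `e₇ = v∂y`. -/
noncomputable def e₇ : (Fin 4 → ℝ) → Fin 4 → ℝ := fun p => ![0, p 3, 0, 0]

noncomputable def L (M : Matrix (Fin 4) (Fin 4) ℝ) : (Fin 4 → ℝ) →L[ℝ] (Fin 4 → ℝ) :=
  LinearMap.toContinuousLinearMap M.mulVecLin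

lemma fderiv_affine (M : Matrix (Fin 4) (Fin 4) ℝ) (c : Fin 4 → ℝ) (p : Fin 4 → ℝ) :
    fderiv ℝ (fun q => M.mulVec q + c) p = L M := by
  have h : HasFDerivAt (fun q => M.mulVec q + c) (L M) p :=
    ((L M).hasFDerivAt (x := p)).add_const c
  exact h.fderiv

lemma hF (p : ℝ × ℝ) : HasFDerivAt F ((2 * p.1 ^ 1) • ContinuousLinearMap.fst ℝ ℝ ℝ) p := by
  have h1 : HasFDerivAt (Prod.fst : ℝ × ℝ → ℝ) (ContinuousLinearMap.fst ℝ ℝ ℝ) p :=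
    hasFDerivAt_fst
  rw [show (2 * p.1 ^ 1 : ℝ) = ((2 : ℕ) : ℝ) * p.1 ^ (2 - 1) by norm_num]
  exact (hasDerivAt_pow 2 p.1).comp_hasFDerivAt p h1

lemma hG (p : ℝ × ℝ) : HasFDerivAt G ((3 * p.1 ^ 2) • ContinuousLinearMap.fst ℝ ℝ ℝ) p := by
  have h1 : HasFDerivAt (Prod.fst : ℝ × ℝ → ℝ) (ContinuousLinearMap.fst ℝ ℝ ℝ) p :=
    hasFDerivAt_fst
  rw [show (3 * p.1 ^ 2 : ℝ) = ((3 : ℕ) : ℝ) * p.1 ^ (3 - 1) by norm_num]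
  exact (hasDerivAt_pow 3 p.1).comp_hasFDerivAt p h1

lemma fderivF10 (p : ℝ × ℝ) : fderiv ℝ F p (1, 0) = 2 * p.1 := by
  rw [(hF p).fderiv]; simp
lemma fderivF01 (p : ℝ × ℝ) : fderiv ℝ F p (0, 1) = 0 := by
  rw [(hF p).fderiv]; simp
lemma fderivG10 (p : ℝ × ℝ) : fderiv ℝ G p (1, 0) = 3 * p.1 ^ 2 := by
  rw [(hG p).fderiv]; simp
lemma fderivG01 (p : ℝ × ℝ) : fderiv ℝ G p (0, 1) = 0 := by
  rw [(hG p).fderiv]; simp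

def M₁ : Matrix (Fin 4) (Fin 4) ℝ := !![0,0,0,0; 0,0,0,0; 2,0,0,0; 0,0,3,0]
def M₂ : Matrix (Fin 4) (Fin 4) ℝ := 0
def M₃ : Matrix (Fin 4) (Fin 4) ℝ := !![1,0,0,0; 0,0,0,0; 0,0,2,0; 0,0,0,3]
def M₄ : Matrix (Fin 4) (Fin 4) ℝ := !![0,0,0,0; 1,0,0,0; 0,0,0,0; 0,0,0,0]
def M₅ : Matrix (Fin 4) (Fin 4) ℝ := !![0,0,0,0; 0,1,0,0; 0,0,0,0; 0,0,0,0]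
def M₆ : Matrix (Fin 4) (Fin 4) ℝ := !![0,0,0,0; 0,0,1,0; 0,0,0,0; 0,0,0,0]
def M₇ : Matrix (Fin 4) (Fin 4) ℝ := !![0,0,0,0; 0,0,0,1; 0,0,0,0; 0,0,0,0]

lemma e₁_eq : e₁ = fun q => M₁.mulVec q + ![1,0,0,0] := by
  funext q i
  fin_cases i <;>
    simp [e₁, M₁, Matrix.mulVec, dotProduct, Fin.sum_univ_four, Matrix.vecHead, Matrix.vecTail]
lemma e₂_eq : e₂ = fun q => M₂.mulVec q + ![0,1,0,0] := by
  funext q i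
  fin_cases i <;>
    simp [e₂, M₂, Matrix.mulVec, dotProduct, Fin.sum_univ_four, Matrix.vecHead, Matrix.vecTail]
lemma e₃_eq : e₃ = fun q => M₃.mulVec q + 0 := by
  funext q i
  fin_cases i <;>
    simp [e₃, M₃, Matrix.mulVec, dotProduct, Fin.sum_univ_four, Matrix.vecHead, Matrix.vecTail]
lemma e₄_eq : e₄ = fun q => M₄.mulVec q + 0 := by
  funext q i
  fin_cases i <;>
    simp [e₄, M₄, Matrix.mulVec, dotProduct, Fin.sum_univ_four, Matrix.vecHead, Matrix.vecTail]
lemma e₅_eq : e₅ = fun q => M₅.mulVec q + 0 := by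
  funext q i
  fin_cases i <;>
    simp [e₅, M₅, Matrix.mulVec, dotProduct, Fin.sum_univ_four, Matrix.vecHead, Matrix.vecTail]
lemma e₆_eq : e₆ = fun q => M₆.mulVec q + 0 := by
  funext q i
  fin_cases i <;>
    simp [e₆, M₆, Matrix.mulVec, dotProduct, Fin.sum_univ_four, Matrix.vecHead, Matrix.vecTail]
lemma e₇_eq : e₇ = fun q => M₇.mulVec q + 0 := by
  funext q i
  fin_cases i <;>
    simp [e₇, M₇, Matrix.mulVec, dotProduct, Fin.sum_univ_four, Matrix.vecHead, Matrix.vecTail]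

lemma fderiv_e₁ (p : Fin 4 → ℝ) : fderiv ℝ e₁ p = L M₁ := by
  rw [e₁_eq]; exact fderiv_affine _ _ _
lemma fderiv_e₂ (p : Fin 4 → ℝ) : fderiv ℝ e₂ p = L M₂ := by
  rw [e₂_eq]; exact fderiv_affine _ _ _
lemma fderiv_e₃ (p : Fin 4 → ℝ) : fderiv ℝ e₃ p = L M₃ := by
  rw [e₃_eq]; exact fderiv_affine _ _ _
lemma fderiv_e₄ (p : Fin 4 → ℝ) : fderiv ℝ e₄ p = L M₄ := by
  rw [e₄_eq]; exact fderiv_affine _ _ _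
lemma fderiv_e₅ (p : Fin 4 → ℝ) : fderiv ℝ e₅ p = L M₅ := by
  rw [e₅_eq]; exact fderiv_affine _ _ _
lemma fderiv_e₆ (p : Fin 4 → ℝ) : fderiv ℝ e₆ p = L M₆ := by
  rw [e₆_eq]; exact fderiv_affine _ _ _
lemma fderiv_e₇ (p : Fin 4 → ℝ) : fderiv ℝ e₇ p = L M₇ := by
  rw [e₇_eq]; exact fderiv_affine _ _ _

lemma L_apply (M : Matrix (Fin 4) (Fin 4) ℝ) (v : Fin 4 → ℝ) : L M v = M.mulVec v := rfl

/-- **Model 2b3c5a:** the surface `{u = x², v = x³}` is affinely homogeneous, with the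
seven tangent affine vector fields `e₁, …, e₇` satisfying the stated bracket relations. -/
theorem model_2b3c5a :
    (TangentToGraph F G e₁ ∧ TangentToGraph F G e₂ ∧ TangentToGraph F G e₃ ∧
      TangentToGraph F G e₄ ∧ TangentToGraph F G e₅ ∧ TangentToGraph F G e₆ ∧
      TangentToGraph F G e₇) ∧
    (∀ p : ℝ × ℝ,
      e₁ ![p.1, p.2, F p, G p] 0 = 1 ∧ e₁ ![p.1, p.2, F p, G p] 1 = 0 ∧
      e₂ ![p.1, p.2, F p, G p] 0 = 0 ∧ e₂ ![p.1, p.2, F p, G p] 1 = 1 ∧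
      LinearIndependent ℝ
        ![((e₁ ![p.1, p.2, F p, G p] 0, e₁ ![p.1, p.2, F p, G p] 1) : ℝ × ℝ),
          ((e₂ ![p.1, p.2, F p, G p] 0, e₂ ![p.1, p.2, F p, G p] 1) : ℝ × ℝ)]) ∧
    (lieBracket e₁ e₃ = e₁ ∧ lieBracket e₁ e₄ = e₂ ∧
      lieBracket e₁ e₆ = (2 : ℝ) • e₄ ∧ lieBracket e₁ e₇ = (3 : ℝ) • e₆ ∧
      lieBracket e₂ e₅ = e₂ ∧ lieBracket e₃ e₄ = e₄ ∧
      lieBracket e₃ e₆ = (2 : ℝ) • e₆ ∧ lieBracket e₃ e₇ = (3 : ℝ) • e₇ ∧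
      lieBracket e₄ e₅ = e₄ ∧ lieBracket e₅ e₆ = -e₆ ∧ lieBracket e₅ e₇ = -e₇ ∧
      lieBracket e₁ e₂ = 0) := by
  refine ⟨⟨?_, ?_, ?_, ?_, ?_, ?_, ?_⟩, ?_, ?_, ?_, ?_, ?_, ?_, ?_, ?_, ?_, ?_, ?_, ?_, ?_⟩
  · intro p
    simp [e₁, F, G, fderivF10, fderivF01, fderivG10, fderivG01]
  · intro p
    simp [e₂, fderivF10, fderivF01, fderivG10, fderivG01]
  · intro p
    simp [e₃, F, G, fderivF10, fderivF01, fderivG10, fderivG01]; constructor <;> ring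
  · intro p
    simp [e₄, fderivF10, fderivF01, fderivG10, fderivG01]
  · intro p
    simp [e₅, fderivF10, fderivF01, fderivG10, fderivG01]
  · intro p
    simp [e₆, fderivF10, fderivF01, fderivG10, fderivG01]
  · intro p
    simp [e₇, fderivF10, fderivF01, fderivG10, fderivG01]
  · intro p
    refine ⟨by simp [e₁], by simp [e₁], by simp [e₂], by simp [e₂], ?_⟩
    simp only [e₁, e₂]
    rw [linearIndependent_fin2]
    constructor
    · simp [Prod.ext_iff]
    · intro a
      simp [Prod.ext_iff]
  all_goals
    funext p i
    simp only [lieBracket, fderiv_e₁, fderiv_e₂, fderiv_e₃, fderiv_e₄, fderiv_e₅,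
      fderiv_e₆, fderiv_e₇, L_apply, Pi.sub_apply, Pi.smul_apply, Pi.neg_apply,
      Pi.zero_apply, smul_eq_mul]
    fin_cases i <;>
      simp [e₁, e₂, e₃, e₄, e₅, e₆, e₇, M₁, M₂, M₃, M₄, M₅, M₆, M₇,
        Matrix.mulVec, dotProduct, Fin.sum_univ_four, Matrix.vecHead, Matrix.vecTail] <;> try ring

end Model2b3c5a
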